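/- Fix s ≥ 0 and a sign σ ∈ {+1, −1}. There exist M₀ = M₀(s) and, for each M ≥ M₀, a constant C > 0 such that the kernel K¹_ξ(η,(θ,λ)) := (⟨ξ² + η²⟩^{s/2} / ⟨ξ² + θ²⟩^{s/2}) · (|η|/|ξ|) · ⟨(θ² + σ η²)/ξ⟩^{−M} · 1_{{|λ − ξ⁵ + θ²/ξ| ≤ 1}} satisfies, uniformly in ξ ≠ 0: ∫_ℝ K¹_ξ(η,(θ,λ)) dη ≤ C for all θ, λ, and ∫_{ℝ²} K¹_ξ(η,(θ,λ)) dθ dλ ≤ C for all η. Consequently the integral operator with kernel K¹_ξ is bounded on L² uniformly in ξ. -/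

import Mathlib

open MeasureTheory
open scoped ENNReal

/-- Japanese bracket `⟨x⟩ = (1 + x²)^{1/2}`. -/
noncomputable def jap (x : ℝ) : ℝ := Real.sqrt (1 + x ^ 2)

/-- The kernel `K¹_ξ(η,(θ,λ))` from the Kato smoothing estimate for the Duhamel term. -/
noncomputable def K1ker (s M σ ξ η θ lam : ℝ) : ℝ :=
  (jap (ξ ^ 2 + η ^ 2) ^ (s/2) / jap (ξ ^ 2 + θ ^ 2) ^ (s/2)) * (|η| / |ξ|) *
    jap ((θ ^ 2 + σ * η ^ 2) / ξ) ^ (-M) *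
    (if |lam - ξ ^ 5 + θ ^ 2 / ξ| ≤ 1 then 1 else 0)

lemma jap_pos (x : ℝ) : 0 < jap x := Real.sqrt_pos.2 (by positivity)

lemma one_le_jap (x : ℝ) : 1 ≤ jap x := by
  have h := Real.sqrt_le_sqrt (show (1:ℝ) ≤ 1 + x ^ 2 by nlinarith [sq_nonneg x])
  simpa [jap] using h

lemma abs_le_jap (x : ℝ) : |x| ≤ jap x := by
  rw [jap, ← Real.sqrt_sq_eq_abs]
  exact Real.sqrt_le_sqrt (by nlinarith)

lemma jap_sq (x : ℝ) : jap x ^ 2 = 1 + x ^ 2 := Real.sq_sqrt (by positivity)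

/-- bracket inequality -/
lemma jap_bracket {X Y u b : ℝ} (hX : 0 ≤ X) (hY : 0 ≤ Y) (hb : b ^ 2 ≤ 1 + X ^ 2)
    (hYle : Y ≤ X + |u| * |b|) : jap Y ≤ Real.sqrt 2 * jap X * jap u := by
  have h2 : Real.sqrt 2 * jap X * jap u = Real.sqrt (2 * ((1 + X ^ 2) * (1 + u ^ 2))) := by
    rw [Real.sqrt_mul (by norm_num), Real.sqrt_mul (by positivity), jap, jap, mul_assoc]
  rw [h2, jap]
  apply Real.sqrt_le_sqrt
  have habs : |u| * |b| = |u * b| := (abs_mul u b).symm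
  have h3 : Y ^ 2 ≤ (X + |u| * |b|) ^ 2 := by
    apply sq_le_sq' _ hYle
    nlinarith [abs_nonneg u, abs_nonneg b]
  have h4 : (|u| * |b|) ^ 2 = u ^ 2 * b ^ 2 := by
    rw [mul_pow, sq_abs, sq_abs]
  nlinarith [sq_nonneg (X - |u| * |b|), sq_nonneg u, sq_nonneg (u * X), abs_nonneg u, abs_nonneg b]

lemma core_le (s M σ ξ η θ : ℝ) (hs : 0 ≤ s) (hσ : σ = 1 ∨ σ = -1) (hξ : ξ ≠ 0)
    (hM : s / 2 + 3 ≤ M) :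
    (jap (ξ ^ 2 + η ^ 2) ^ (s/2) / jap (ξ ^ 2 + θ ^ 2) ^ (s/2)) * (|η| / |ξ|) *
      jap ((θ ^ 2 + σ * η ^ 2) / ξ) ^ (-M)
    ≤ (2:ℝ) ^ (s/4) * ((|η| / |ξ|) * (jap ((θ ^ 2 + σ * η ^ 2) / ξ) ^ 3)⁻¹) := by
  set u : ℝ := (θ ^ 2 + σ * η ^ 2) / ξ with hu
  have h1 : |u| * |ξ| = |θ ^ 2 + σ * η ^ 2| := by
    rw [← abs_mul, hu, div_mul_cancel₀ _ hξ]
  have hY : ξ ^ 2 + η ^ 2 ≤ (ξ ^ 2 + θ ^ 2) + |u| * |ξ| := by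
    rw [h1]
    rcases hσ with h | h <;> subst h
    · nlinarith [le_abs_self (θ ^ 2 + 1 * η ^ 2)]
    · nlinarith [neg_abs_le (θ ^ 2 + (-1) * η ^ 2)]
  have hbr : jap (ξ ^ 2 + η ^ 2) ≤ Real.sqrt 2 * jap (ξ ^ 2 + θ ^ 2) * jap u :=
    jap_bracket (by positivity) (by positivity) (by nlinarith [sq_nonneg (ξ^2 + θ^2)]) hY
  have hXpos : (0:ℝ) < jap (ξ ^ 2 + θ ^ 2) ^ (s/2) :=
    Real.rpow_pos_of_pos (jap_pos _) _
  have hsq2 : Real.sqrt 2 ^ (s/2) = (2:ℝ) ^ (s/4) := by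
    rw [Real.sqrt_eq_rpow, ← Real.rpow_mul (by norm_num)]
    congr 1; ring
  have hratio : jap (ξ ^ 2 + η ^ 2) ^ (s/2) / jap (ξ ^ 2 + θ ^ 2) ^ (s/2)
      ≤ (2:ℝ) ^ (s/4) * jap u ^ (s/2) := by
    rw [div_le_iff₀ hXpos]
    calc jap (ξ ^ 2 + η ^ 2) ^ (s/2)
        ≤ (Real.sqrt 2 * jap (ξ ^ 2 + θ ^ 2) * jap u) ^ (s/2) :=
          Real.rpow_le_rpow (jap_pos _).le hbr (by positivity)
      _ = Real.sqrt 2 ^ (s/2) * jap (ξ ^ 2 + θ ^ 2) ^ (s/2) * jap u ^ (s/2) := by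
          rw [Real.mul_rpow (mul_nonneg (Real.sqrt_nonneg 2) (jap_pos _).le) (jap_pos u).le,
            Real.mul_rpow (Real.sqrt_nonneg 2) (jap_pos _).le]
      _ = (2:ℝ) ^ (s/4) * jap u ^ (s/2) * jap (ξ ^ 2 + θ ^ 2) ^ (s/2) := by
          rw [hsq2]; ring
  have hpow : jap u ^ (s/2) * jap u ^ (-M) ≤ (jap u ^ 3)⁻¹ := by
    rw [← Real.rpow_add (jap_pos u)]
    have : jap u ^ (s/2 + -M) ≤ jap u ^ (-(3:ℝ)) :=
      Real.rpow_le_rpow_of_exponent_le (one_le_jap u) (by linarith)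
    calc jap u ^ (s/2 + -M) ≤ jap u ^ (-(3:ℝ)) := this
      _ = (jap u ^ 3)⁻¹ := by
          rw [Real.rpow_neg (le_of_lt (jap_pos u)),
            show ((3:ℝ)) = ((3:ℕ):ℝ) by norm_num, Real.rpow_natCast]
  have hw : (0:ℝ) ≤ |η| / |ξ| := by positivity
  calc (jap (ξ ^ 2 + η ^ 2) ^ (s/2) / jap (ξ ^ 2 + θ ^ 2) ^ (s/2)) * (|η| / |ξ|) *
        jap u ^ (-M)
      ≤ ((2:ℝ) ^ (s/4) * jap u ^ (s/2)) * (|η| / |ξ|) * jap u ^ (-M) := by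
        apply mul_le_mul_of_nonneg_right _ (Real.rpow_pos_of_pos (jap_pos u) _).le
        exact mul_le_mul_of_nonneg_right hratio hw
    _ = (2:ℝ) ^ (s/4) * ((|η| / |ξ|) * (jap u ^ (s/2) * jap u ^ (-M))) := by ring
    _ ≤ (2:ℝ) ^ (s/4) * ((|η| / |ξ|) * (jap u ^ 3)⁻¹) := by
        apply mul_le_mul_of_nonneg_left _ (by positivity)
        exact mul_le_mul_of_nonneg_left hpow hw

lemma layer {v w : ℝ → ℝ} (hv : Measurable v) (hw : ∀ x, 0 ≤ w x) {B : ℝ} (hB : 0 ≤ B)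
    (hest : ∀ t : ℝ, 1 ≤ t →
      ∫⁻ x in {x | |v x| ≤ t}, ENNReal.ofReal (w x) ≤ ENNReal.ofReal (B * t)) :
    ∫⁻ x, ENNReal.ofReal (w x * (jap (v x) ^ 3)⁻¹) ≤ ENNReal.ofReal (8 * B) := by
  classical
  set c : ℕ → ℝ := fun k => if k = 0 then 0 else 2 ^ k with hc
  have hcmono : StrictMono c := by
    apply strictMono_nat_of_lt_succ
    intro n
    rcases Nat.eq_zero_or_pos n with h | h
    · subst h; simp [hc]
    · simp only [hc, if_neg h.ne', if_neg (Nat.succ_ne_zero n)]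
      exact pow_lt_pow_right₀ (by norm_num) (Nat.lt_succ_self n)
  set A : ℕ → Set ℝ := fun k => {x | c k ≤ |v x| ∧ |v x| < c (k + 1)} with hA
  have hAm : ∀ k, MeasurableSet (A k) := by
    intro k
    exact (measurableSet_le measurable_const hv.abs).inter
      (measurableSet_lt hv.abs measurable_const)
  have hAd : Pairwise (Function.onFun Disjoint A) := by
    intro i j hij
    have key : ∀ i j : ℕ, i < j → Disjoint (A i) (A j) := by
      intro i j h
      rw [Set.disjoint_left]
      rintro x ⟨-, h2⟩ ⟨h3, -⟩
      have : c (i + 1) ≤ c j := hcmono.monotone h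
      exact absurd (h2.trans_le (this.trans h3)) (lt_irrefl _)
    rcases hij.lt_or_gt with h | h
    · exact key _ _ h
    · exact (key _ _ h).symm
  have hcover : (⋃ k, A k) = Set.univ := by
    ext x
    simp only [Set.mem_iUnion, Set.mem_univ, iff_true, hA, Set.mem_setOf_eq]
    have hex : ∃ n : ℕ, |v x| < c (n + 1) := by
      obtain ⟨n, hn⟩ := pow_unbounded_of_one_lt (|v x|) (show (1:ℝ) < 2 by norm_num)
      exact ⟨n, by simpa [hc, Nat.succ_ne_zero] using
        hn.trans_le (pow_le_pow_right₀ (by norm_num) (Nat.le_succ n))⟩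
    refine ⟨Nat.find hex, ?_, Nat.find_spec hex⟩
    rcases Nat.eq_zero_or_pos (Nat.find hex) with h | h
    · rw [h]; simp [hc, abs_nonneg]
    · obtain ⟨m, hm⟩ := Nat.exists_eq_succ_of_ne_zero h.ne'
      rw [hm]
      have := Nat.find_min hex (m := m) (by omega)
      push_neg at this
      rw [hc]
      simpa [hc] using this
  have hterm : ∀ k : ℕ, ∫⁻ x in A k, ENNReal.ofReal (w x * (jap (v x) ^ 3)⁻¹)
      ≤ ENNReal.ofReal (2 * B * (1/4 : ℝ) ^ k) := by
    intro k
    have hjap : ∀ x ∈ A k, ((2:ℝ) ^ k) ≤ jap (v x) := by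
      intro x hx
      rcases Nat.eq_zero_or_pos k with h | h
      · rw [h]; simpa using one_le_jap (v x)
      · have : c k ≤ |v x| := hx.1
        rw [hc] at this
        simp only [if_neg h.ne'] at this
        exact this.trans (abs_le_jap _)
    have step1 : ∫⁻ x in A k, ENNReal.ofReal (w x * (jap (v x) ^ 3)⁻¹)
        ≤ ∫⁻ x in A k, ENNReal.ofReal (w x) * ENNReal.ofReal (((8:ℝ) ^ k)⁻¹) := by
      apply setLIntegral_mono' (hAm k)
      intro x hx
      rw [← ENNReal.ofReal_mul (hw x)]
      apply ENNReal.ofReal_le_ofReal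
      apply mul_le_mul_of_nonneg_left _ (hw x)
      have h8 : ((8:ℝ) ^ k) ≤ jap (v x) ^ 3 := by
        have := hjap x hx
        calc ((8:ℝ) ^ k) = ((2:ℝ) ^ k) ^ 3 := by
              rw [show (8:ℝ) = 2 ^ 3 by norm_num, ← pow_mul, ← pow_mul, Nat.mul_comm]
          _ ≤ jap (v x) ^ 3 := pow_le_pow_left₀ (by positivity) this 3
      exact inv_anti₀ (by positivity) h8
    have step2 : ∫⁻ x in A k, ENNReal.ofReal (w x) * ENNReal.ofReal (((8:ℝ) ^ k)⁻¹)
        ≤ ENNReal.ofReal (B * 2 ^ (k + 1)) * ENNReal.ofReal (((8:ℝ) ^ k)⁻¹) := by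
      rw [lintegral_mul_const' _ _ ENNReal.ofReal_ne_top]
      apply mul_le_mul_left
      calc ∫⁻ x in A k, ENNReal.ofReal (w x)
          ≤ ∫⁻ x in {x | |v x| ≤ 2 ^ (k + 1)}, ENNReal.ofReal (w x) := by
            apply lintegral_mono_set
            intro x hx
            have : |v x| < c (k + 1) := hx.2
            rw [hc] at this
            simp only [if_neg (Nat.succ_ne_zero k)] at this
            exact this.le
        _ ≤ ENNReal.ofReal (B * 2 ^ (k + 1)) :=
            hest _ (one_le_pow₀ (by norm_num))
    refine (step1.trans step2).trans ?_
    rw [← ENNReal.ofReal_mul (by positivity)]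
    apply ENNReal.ofReal_le_ofReal
    have : B * 2 ^ (k + 1) * ((8:ℝ) ^ k)⁻¹ = 2 * B * ((2:ℝ) ^ k / 8 ^ k) := by
      field_simp; ring
    rw [this]
    have : ((2:ℝ) ^ k / 8 ^ k) = (1/4 : ℝ) ^ k := by
      field_simp; rw [← mul_pow]; norm_num
    rw [this]
  calc ∫⁻ x, ENNReal.ofReal (w x * (jap (v x) ^ 3)⁻¹)
      = ∫⁻ x in ⋃ k, A k, ENNReal.ofReal (w x * (jap (v x) ^ 3)⁻¹) := by
        rw [hcover, Measure.restrict_univ]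
    _ = ∑' k, ∫⁻ x in A k, ENNReal.ofReal (w x * (jap (v x) ^ 3)⁻¹) :=
        lintegral_iUnion hAm hAd _
    _ ≤ ∑' k, ENNReal.ofReal (2 * B * (1/4 : ℝ) ^ k) := ENNReal.tsum_le_tsum hterm
    _ = ENNReal.ofReal (∑' k, 2 * B * (1/4 : ℝ) ^ k) := by
        rw [ENNReal.ofReal_tsum_of_nonneg (fun k => by positivity)
          ((summable_geometric_of_lt_one (by norm_num) (by norm_num)).mul_left _)]
    _ ≤ ENNReal.ofReal (8 * B) := by
        apply ENNReal.ofReal_le_ofReal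
        rw [tsum_mul_left, tsum_geometric_of_lt_one (by norm_num) (by norm_num)]
        norm_num
        linarith

lemma subset_shell {a b : ℝ} (ha : 0 ≤ a) :
    {x : ℝ | a ≤ |x| ∧ |x| ≤ b} ⊆ Set.Icc (-b) (-a) ∪ Set.Icc a b := by
  intro x ⟨h1, h2⟩
  rcases le_or_gt 0 x with h | h
  · right; rw [abs_of_nonneg h] at h1 h2; exact ⟨h1, h2⟩
  · left; rw [abs_of_neg h] at h1 h2; constructor <;> linarith

lemma est_piece {a b : ℝ} (ha : 0 ≤ a) (hab : a ≤ b) :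
    ∫⁻ x in {x : ℝ | a ≤ |x| ∧ |x| ≤ b}, ENNReal.ofReal |x| ≤
      ENNReal.ofReal (2 * (b ^ 2 - a ^ 2)) := by
  have hIcc : ∀ l u : ℝ, l ≤ u → (∀ x ∈ Set.Icc l u, |x| ≤ b) →
      ∫⁻ x in Set.Icc l u, ENNReal.ofReal |x| ≤ ENNReal.ofReal b * ENNReal.ofReal (u - l) := by
    intro l u hlu habs
    calc ∫⁻ x in Set.Icc l u, ENNReal.ofReal |x|
        ≤ ∫⁻ _ in Set.Icc l u, ENNReal.ofReal b :=
          setLIntegral_mono' measurableSet_Icc (fun x hx => ENNReal.ofReal_le_ofReal (habs x hx))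
      _ = ENNReal.ofReal b * volume (Set.Icc l u) := setLIntegral_const _ _
      _ = ENNReal.ofReal b * ENNReal.ofReal (u - l) := by rw [Real.volume_Icc]
  calc ∫⁻ x in {x : ℝ | a ≤ |x| ∧ |x| ≤ b}, ENNReal.ofReal |x|
      ≤ ∫⁻ x in Set.Icc (-b) (-a) ∪ Set.Icc a b, ENNReal.ofReal |x| :=
        lintegral_mono_set (subset_shell ha)
    _ ≤ (∫⁻ x in Set.Icc (-b) (-a), ENNReal.ofReal |x|) +
        ∫⁻ x in Set.Icc a b, ENNReal.ofReal |x| := lintegral_union_le _ _ _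
    _ ≤ ENNReal.ofReal b * ENNReal.ofReal (-a - -b) + ENNReal.ofReal b * ENNReal.ofReal (b - a) := by
        gcongr
        · exact hIcc _ _ (by linarith) (fun x hx => by
            rw [abs_of_nonpos (le_trans hx.2 (by linarith))]; linarith [hx.1])
        · exact hIcc _ _ hab (fun x hx => by
            rw [abs_of_nonneg (le_trans ha hx.1)]; exact hx.2)
    _ ≤ ENNReal.ofReal (2 * (b ^ 2 - a ^ 2)) := by
        have hb : 0 ≤ b := ha.trans hab
        rw [← ENNReal.ofReal_mul hb, ← ENNReal.ofReal_mul hb, ← ENNReal.ofReal_add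
          (by nlinarith) (by nlinarith)]
        apply ENNReal.ofReal_le_ofReal
        nlinarith

lemma vol_shell {a b : ℝ} (ha : 0 ≤ a) (hab : a ≤ b) :
    volume {x : ℝ | a ≤ |x| ∧ |x| ≤ b} ≤ ENNReal.ofReal (2 * (b - a)) := by
  calc volume {x : ℝ | a ≤ |x| ∧ |x| ≤ b}
      ≤ volume (Set.Icc (-b) (-a) ∪ Set.Icc a b) := measure_mono (subset_shell ha)
    _ ≤ volume (Set.Icc (-b) (-a)) + volume (Set.Icc a b) := measure_union_le _ _
    _ = ENNReal.ofReal (-a - -b) + ENNReal.ofReal (b - a) := by rw [Real.volume_Icc, Real.volume_Icc]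
    _ ≤ ENNReal.ofReal (2 * (b - a)) := by
        rw [← ENNReal.ofReal_add (by linarith) (by linarith)]
        apply ENNReal.ofReal_le_ofReal; linarith

lemma abs_le_mul_abs {σ ξ x y t : ℝ} (hξ : ξ ≠ 0) (h : |(x + σ * y) / ξ| ≤ t) :
    |x + σ * y| ≤ t * |ξ| := by
  rw [abs_div] at h
  calc |x + σ * y| = |x + σ * y| / |ξ| * |ξ| := by
        field_simp
    _ ≤ t * |ξ| := by
        apply mul_le_mul_of_nonneg_right h (abs_nonneg ξ)

/-- From the constraint, the square of the other variable lies in a window. -/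
lemma sq_window {σ ξ x y t : ℝ} (hσ : σ = 1 ∨ σ = -1) (hξ : ξ ≠ 0)
    (h : |(x ^ 2 + σ * y ^ 2) / ξ| ≤ t) :
    x ^ 2 - t * |ξ| ≤ y ^ 2 ∧ y ^ 2 ≤ x ^ 2 + t * |ξ| := by
  have h2 := abs_le_mul_abs hξ h
  rw [abs_le] at h2
  rcases hσ with h1 | h1 <;> subst h1 <;>
    constructor <;> nlinarith [sq_nonneg x, sq_nonneg y]

/-- window for the first (`x`) variable. -/
lemma sq_window' {σ ξ x y t : ℝ} (hσ : σ = 1 ∨ σ = -1) (hξ : ξ ≠ 0)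
    (h : |(x ^ 2 + σ * y ^ 2) / ξ| ≤ t) :
    y ^ 2 - t * |ξ| ≤ x ^ 2 ∧ x ^ 2 ≤ y ^ 2 + t * |ξ| := by
  have h2 := abs_le_mul_abs hξ h
  rw [abs_le] at h2
  rcases hσ with h1 | h1 <;> subst h1 <;>
    constructor <;> nlinarith [sq_nonneg x, sq_nonneg y]

lemma estI (σ ξ θ : ℝ) (hσ : σ = 1 ∨ σ = -1) (hξ : ξ ≠ 0) (t : ℝ) (ht : 1 ≤ t) :
    ∫⁻ η in {η : ℝ | |(θ ^ 2 + σ * η ^ 2) / ξ| ≤ t}, ENNReal.ofReal (|η| / |ξ|) ≤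
      ENNReal.ofReal (4 * t) := by
  have hξ' : (0:ℝ) < |ξ| := abs_pos.2 hξ
  set a : ℝ := Real.sqrt (max (θ ^ 2 - t * |ξ|) 0) with hadef
  set b : ℝ := Real.sqrt (θ ^ 2 + t * |ξ|) with hbdef
  have ha : 0 ≤ a := Real.sqrt_nonneg _
  have hb2 : b ^ 2 = θ ^ 2 + t * |ξ| := Real.sq_sqrt (by nlinarith)
  have ha2 : a ^ 2 = max (θ ^ 2 - t * |ξ|) 0 := Real.sq_sqrt (le_max_right _ _)
  have hab : a ≤ b := by
    apply Real.sqrt_le_sqrt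
    apply max_le <;> nlinarith
  have hsub : {η : ℝ | |(θ ^ 2 + σ * η ^ 2) / ξ| ≤ t} ⊆ {η : ℝ | a ≤ |η| ∧ |η| ≤ b} := by
    intro η hη
    obtain ⟨hl, hr⟩ := sq_window hσ hξ hη
    constructor
    · have h := Real.sqrt_le_sqrt (max_le hl (sq_nonneg η))
      rwa [Real.sqrt_sq_eq_abs, ← hadef] at h
    · have h := Real.sqrt_le_sqrt hr
      rwa [Real.sqrt_sq_eq_abs, ← hbdef] at h
  calc ∫⁻ η in {η : ℝ | |(θ ^ 2 + σ * η ^ 2) / ξ| ≤ t}, ENNReal.ofReal (|η| / |ξ|)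
      ≤ ∫⁻ η in {η : ℝ | a ≤ |η| ∧ |η| ≤ b}, ENNReal.ofReal (|η| / |ξ|) :=
        lintegral_mono_set hsub
    _ = ∫⁻ η in {η : ℝ | a ≤ |η| ∧ |η| ≤ b}, ENNReal.ofReal |η| * ENNReal.ofReal |ξ|⁻¹ := by
        apply lintegral_congr
        intro η
        rw [div_eq_mul_inv, ENNReal.ofReal_mul (abs_nonneg η)]
    _ ≤ ENNReal.ofReal (2 * (b ^ 2 - a ^ 2)) * ENNReal.ofReal |ξ|⁻¹ := by
        rw [lintegral_mul_const' _ _ ENNReal.ofReal_ne_top]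
        exact mul_le_mul_left (est_piece ha hab) _
    _ ≤ ENNReal.ofReal (4 * t) := by
        rw [← ENNReal.ofReal_mul (by nlinarith)]
        apply ENNReal.ofReal_le_ofReal
        have h1 : b ^ 2 - a ^ 2 ≤ 2 * (t * |ξ|) := by
          rw [hb2, ha2]
          have := le_max_left (θ ^ 2 - t * |ξ|) 0
          nlinarith
        rw [mul_comm, ← div_eq_inv_mul, div_le_iff₀ hξ']
        nlinarith

lemma estII (σ ξ η : ℝ) (hσ : σ = 1 ∨ σ = -1) (hξ : ξ ≠ 0) (t : ℝ) (ht : 1 ≤ t) :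
    ∫⁻ θ in {θ : ℝ | |(θ ^ 2 + σ * η ^ 2) / ξ| ≤ t}, ENNReal.ofReal (|η| / |ξ|) ≤
      ENNReal.ofReal (4 * t) := by
  have hξ' : (0:ℝ) < |ξ| := abs_pos.2 hξ
  set a : ℝ := Real.sqrt (max (η ^ 2 - t * |ξ|) 0) with hadef
  set b : ℝ := Real.sqrt (η ^ 2 + t * |ξ|) with hbdef
  have ha : 0 ≤ a := Real.sqrt_nonneg _
  have hbpos : 0 < b := Real.sqrt_pos.2 (by nlinarith)
  have hb2 : b ^ 2 = η ^ 2 + t * |ξ| := Real.sq_sqrt (by nlinarith)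
  have ha2 : a ^ 2 = max (η ^ 2 - t * |ξ|) 0 := Real.sq_sqrt (le_max_right _ _)
  have hab : a ≤ b := by
    apply Real.sqrt_le_sqrt
    apply max_le <;> nlinarith
  have hetab : |η| ≤ b := by
    rw [hbdef, ← Real.sqrt_sq_eq_abs]
    exact Real.sqrt_le_sqrt (by nlinarith)
  have hsub : {θ : ℝ | |(θ ^ 2 + σ * η ^ 2) / ξ| ≤ t} ⊆ {θ : ℝ | a ≤ |θ| ∧ |θ| ≤ b} := by
    intro θ hθ
    obtain ⟨hl, hr⟩ := sq_window' hσ hξ hθ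
    constructor
    · have h := Real.sqrt_le_sqrt (max_le hl (sq_nonneg θ))
      rwa [Real.sqrt_sq_eq_abs, ← hadef] at h
    · have h := Real.sqrt_le_sqrt hr
      rwa [Real.sqrt_sq_eq_abs, ← hbdef] at h
  calc ∫⁻ θ in {θ : ℝ | |(θ ^ 2 + σ * η ^ 2) / ξ| ≤ t}, ENNReal.ofReal (|η| / |ξ|)
      ≤ ∫⁻ θ in {θ : ℝ | a ≤ |θ| ∧ |θ| ≤ b}, ENNReal.ofReal (|η| / |ξ|) :=
        lintegral_mono_set hsub
    _ = ENNReal.ofReal (|η| / |ξ|) * volume {θ : ℝ | a ≤ |θ| ∧ |θ| ≤ b} :=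
        setLIntegral_const _ _
    _ ≤ ENNReal.ofReal (|η| / |ξ|) * ENNReal.ofReal (2 * (b - a)) :=
        mul_le_mul_right (vol_shell ha hab) _
    _ ≤ ENNReal.ofReal (4 * t) := by
        rw [← ENNReal.ofReal_mul (by positivity)]
        apply ENNReal.ofReal_le_ofReal
        have h1 : b ^ 2 - a ^ 2 ≤ 2 * (t * |ξ|) := by
          rw [hb2, ha2]
          have := le_max_left (η ^ 2 - t * |ξ|) 0
          nlinarith
        have h2 : |η| * (b - a) ≤ b ^ 2 - a ^ 2 := by
          nlinarith [abs_nonneg η]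
        rw [div_mul_eq_mul_div, div_le_iff₀ hξ']
        nlinarith

lemma schur {α β : Type*} [MeasurableSpace α] [MeasurableSpace β]
    (μ : Measure α) (ν : Measure β) [SFinite μ] [SFinite ν]
    (k : α → β → ℝ) (hk : Measurable (Function.uncurry k)) (hk0 : ∀ x y, 0 ≤ k x y)
    (A : ℝ≥0∞) (hA : A ≠ ∞)
    (hrow : ∀ x, ∫⁻ y, ENNReal.ofReal (k x y) ∂ν ≤ A)
    (hcol : ∀ y, ∫⁻ x, ENNReal.ofReal (k x y) ∂μ ≤ A)
    (f : β → ℝ) (hf : MemLp f 2 ν) :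
    eLpNorm (fun x => ∫ y, k x y * f y ∂ν) 2 μ ≤ A * eLpNorm f 2 ν := by
  set K : α → β → ℝ≥0∞ := fun x y => ENNReal.ofReal (k x y) with hK
  have hKm : Measurable (Function.uncurry K) := by
    exact ENNReal.measurable_ofReal.comp hk
  have hKxm : ∀ x, Measurable (K x) := fun x => hKm.of_uncurry_left
  have hFm : AEMeasurable (fun y => (‖f y‖₊ : ℝ≥0∞)) ν := hf.1.aemeasurable.nnnorm.coe_nnreal_ennreal
  -- pointwise bound
  have step1 : ∀ x, (‖∫ y, k x y * f y ∂ν‖₊ : ℝ≥0∞) ≤ ∫⁻ y, K x y * ‖f y‖₊ ∂ν := by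
    intro x
    refine (enorm_integral_le_lintegral_enorm _).trans ?_
    apply lintegral_mono
    intro y
    show (‖k x y * f y‖₊ : ℝ≥0∞) ≤ K x y * ‖f y‖₊
    rw [nnnorm_mul, ENNReal.coe_mul, hK]
    apply mul_le_mul_left
    exact (Real.enorm_eq_ofReal (hk0 x y)).le
  -- Cauchy-Schwarz
  have step2 : ∀ x, ∫⁻ y, K x y * ‖f y‖₊ ∂ν ≤
      A ^ ((1:ℝ)/2) * (∫⁻ y, K x y * (‖f y‖₊ : ℝ≥0∞) ^ (2:ℝ) ∂ν) ^ ((1:ℝ)/2) := by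
    intro x
    have hCS := ENNReal.lintegral_mul_le_Lp_mul_Lq ν (by constructor <;> norm_num : (2:ℝ).HolderConjugate 2)
      ((hKxm x).pow_const ((1:ℝ)/2)).aemeasurable
      (((hKxm x).pow_const ((1:ℝ)/2)).aemeasurable.mul hFm)
    have heq : ∀ y, (K x y ^ ((1:ℝ)/2)) * (K x y ^ ((1:ℝ)/2) * ‖f y‖₊) = K x y * ‖f y‖₊ := by
      intro y
      rw [← mul_assoc, ← ENNReal.rpow_add_of_nonneg _ _ (by norm_num) (by norm_num)]
      norm_num
    have heq2 : ∀ y, (K x y ^ ((1:ℝ)/2)) ^ (2:ℝ) = K x y := by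
      intro y
      rw [← ENNReal.rpow_mul]; norm_num
    calc ∫⁻ y, K x y * ‖f y‖₊ ∂ν
        = ∫⁻ y, ((fun y => K x y ^ ((1:ℝ)/2)) * fun y => K x y ^ ((1:ℝ)/2) * ‖f y‖₊) y ∂ν := by
          apply lintegral_congr; intro y; simp only [Pi.mul_apply]; rw [heq]
      _ ≤ (∫⁻ y, (K x y ^ ((1:ℝ)/2)) ^ (2:ℝ) ∂ν) ^ ((1:ℝ)/2) *
          (∫⁻ y, (K x y ^ ((1:ℝ)/2) * ‖f y‖₊) ^ (2:ℝ) ∂ν) ^ ((1:ℝ)/2) := hCS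
      _ ≤ A ^ ((1:ℝ)/2) * (∫⁻ y, K x y * (‖f y‖₊ : ℝ≥0∞) ^ (2:ℝ) ∂ν) ^ ((1:ℝ)/2) := by
          apply mul_le_mul'
          · apply ENNReal.rpow_le_rpow _ (by norm_num)
            calc ∫⁻ y, (K x y ^ ((1:ℝ)/2)) ^ (2:ℝ) ∂ν = ∫⁻ y, K x y ∂ν := by
                  apply lintegral_congr; intro y; rw [heq2]
              _ ≤ A := hrow x
          · apply ENNReal.rpow_le_rpow _ (by norm_num)
            apply lintegral_mono
            intro y
            show (K x y ^ ((1:ℝ)/2) * (‖f y‖₊:ℝ≥0∞)) ^ (2:ℝ) ≤ K x y * (‖f y‖₊:ℝ≥0∞) ^ (2:ℝ)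
            rw [ENNReal.mul_rpow_of_nonneg _ _ (by norm_num : (0:ℝ) ≤ 2), heq2]
  set G : α → ℝ≥0∞ := fun x => ∫⁻ y, K x y * (‖f y‖₊ : ℝ≥0∞) ^ (2:ℝ) ∂ν with hG
  have hx : ∀ x, (‖∫ y, k x y * f y ∂ν‖₊ : ℝ≥0∞) ^ (2:ℝ) ≤ A * G x := by
    intro x
    calc (‖∫ y, k x y * f y ∂ν‖₊ : ℝ≥0∞) ^ (2:ℝ)
        ≤ (A ^ ((1:ℝ)/2) * (G x) ^ ((1:ℝ)/2)) ^ (2:ℝ) :=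
          ENNReal.rpow_le_rpow ((step1 x).trans (step2 x)) (by norm_num)
      _ = A * G x := by
          rw [ENNReal.mul_rpow_of_nonneg _ _ (by norm_num : (0:ℝ) ≤ 2),
            ← ENNReal.rpow_mul, ← ENNReal.rpow_mul]
          norm_num
  have hFm2 : AEMeasurable (fun y => (‖f y‖₊ : ℝ≥0∞) ^ (2:ℝ)) ν := hFm.pow_const _
  have hswap : ∫⁻ x, G x ∂μ = ∫⁻ y, (∫⁻ x, K x y ∂μ) * (‖f y‖₊ : ℝ≥0∞) ^ (2:ℝ) ∂ν := by
    rw [hG]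
    rw [lintegral_lintegral_swap]
    · apply lintegral_congr
      intro y
      rw [lintegral_mul_const' _ _ (ENNReal.rpow_ne_top_of_nonneg (by norm_num) ENNReal.coe_ne_top)]
    · exact (hKm.aemeasurable.mul
        (hFm2.comp_quasiMeasurePreserving Measure.quasiMeasurePreserving_snd))
  have hGbound : ∫⁻ x, G x ∂μ ≤ A * ∫⁻ y, (‖f y‖₊ : ℝ≥0∞) ^ (2:ℝ) ∂ν := by
    rw [hswap, ← lintegral_const_mul' _ _ hA]
    apply lintegral_mono
    intro y
    exact mul_le_mul_left (hcol y) _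
  have hmain : ∫⁻ x, (‖∫ y, k x y * f y ∂ν‖₊ : ℝ≥0∞) ^ (2:ℝ) ∂μ ≤
      A * A * ∫⁻ y, (‖f y‖₊ : ℝ≥0∞) ^ (2:ℝ) ∂ν := by
    calc ∫⁻ x, (‖∫ y, k x y * f y ∂ν‖₊ : ℝ≥0∞) ^ (2:ℝ) ∂μ
        ≤ ∫⁻ x, A * G x ∂μ := lintegral_mono hx
      _ = A * ∫⁻ x, G x ∂μ := lintegral_const_mul' _ _ hA
      _ ≤ A * (A * ∫⁻ y, (‖f y‖₊ : ℝ≥0∞) ^ (2:ℝ) ∂ν) := mul_le_mul_right hGbound _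
      _ = A * A * ∫⁻ y, (‖f y‖₊ : ℝ≥0∞) ^ (2:ℝ) ∂ν := by rw [mul_assoc]
  have h2 : ((2:ℝ≥0∞)).toReal = (2:ℝ) := by simp
  rw [eLpNorm_eq_lintegral_rpow_enorm_toReal (by norm_num) (by norm_num),
    eLpNorm_eq_lintegral_rpow_enorm_toReal (by norm_num) (by norm_num), h2]
  calc (∫⁻ x, (‖∫ y, k x y * f y ∂ν‖₊ : ℝ≥0∞) ^ (2:ℝ) ∂μ) ^ ((1:ℝ)/2)
      ≤ (A * A * ∫⁻ y, (‖f y‖₊ : ℝ≥0∞) ^ (2:ℝ) ∂ν) ^ ((1:ℝ)/2) :=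
        ENNReal.rpow_le_rpow hmain (by norm_num)
    _ = A * (∫⁻ y, (‖f y‖₊ : ℝ≥0∞) ^ (2:ℝ) ∂ν) ^ ((1:ℝ)/2) := by
        rw [ENNReal.mul_rpow_of_nonneg _ _ (by norm_num : (0:ℝ) ≤ 1/2)]
        congr 1
        rw [show A * A = A ^ ((2:ℕ):ℝ) by rw [ENNReal.rpow_natCast]; ring,
          ← ENNReal.rpow_mul]
        norm_num

lemma continuous_jap : Continuous jap :=
  Real.continuous_sqrt.comp (continuous_const.add (continuous_pow 2))

lemma K1ker_nonneg (s M σ ξ η θ lam : ℝ) : 0 ≤ K1ker s M σ ξ η θ lam := by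
  unfold K1ker
  have h1 := (jap_pos (ξ ^ 2 + η ^ 2)).le
  have h2 := jap_pos (ξ ^ 2 + θ ^ 2)
  have h3 := jap_pos ((θ ^ 2 + σ * η ^ 2) / ξ)
  apply mul_nonneg
  apply mul_nonneg
  apply mul_nonneg
  · exact div_nonneg (Real.rpow_nonneg h1 _) (Real.rpow_nonneg h2.le _)
  · positivity
  · exact Real.rpow_nonneg h3.le _
  · split_ifs <;> norm_num

lemma K1ker_measurable (s M σ ξ : ℝ) :
    Measurable fun q : ℝ × ℝ × ℝ => K1ker s M σ ξ q.1 q.2.1 q.2.2 := by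
  unfold K1ker
  have h1 : Measurable fun q : ℝ × ℝ × ℝ => jap (ξ ^ 2 + q.1 ^ 2) ^ (s/2) :=
    ((continuous_jap.comp (continuous_const.add (continuous_fst.pow 2))).rpow_const
      (fun q => Or.inl (jap_pos _).ne')).measurable
  have h2 : Measurable fun q : ℝ × ℝ × ℝ => jap (ξ ^ 2 + q.2.1 ^ 2) ^ (s/2) :=
    ((continuous_jap.comp (continuous_const.add ((continuous_fst.comp continuous_snd).pow 2))).rpow_const
      (fun q => Or.inl (jap_pos _).ne')).measurable
  have h3 : Measurable fun q : ℝ × ℝ × ℝ =>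
      jap ((q.2.1 ^ 2 + σ * q.1 ^ 2) / ξ) ^ (-M) :=
    ((continuous_jap.comp ((((continuous_fst.comp continuous_snd).pow 2).add
      (continuous_const.mul (continuous_fst.pow 2))).div_const ξ)).rpow_const
      (fun q => Or.inl (jap_pos _).ne')).measurable
  have h4 : Measurable fun q : ℝ × ℝ × ℝ => |q.1| / |ξ| :=
    ((continuous_abs.comp continuous_fst).div_const |ξ|).measurable
  have h5 : Measurable fun q : ℝ × ℝ × ℝ =>
      (if |q.2.2 - ξ ^ 5 + q.2.1 ^ 2 / ξ| ≤ 1 then (1:ℝ) else 0) := by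
    apply Measurable.ite _ measurable_const measurable_const
    exact measurableSet_le
      (((continuous_snd.comp continuous_snd).sub continuous_const).add
        (((continuous_fst.comp continuous_snd).pow 2).div_const ξ)).abs.measurable
      measurable_const
  exact (((h1.div h2).mul h4).mul h3).mul h5

lemma row_bound (s M σ ξ : ℝ) (hs : 0 ≤ s) (hσ : σ = 1 ∨ σ = -1) (hξ : ξ ≠ 0)
    (hM : s / 2 + 3 ≤ M) (θ lam : ℝ) :
    ∫⁻ η : ℝ, ENNReal.ofReal (K1ker s M σ ξ η θ lam) ≤
      ENNReal.ofReal ((2:ℝ) ^ (s/4) * 32) := by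
  have hpt : ∀ η : ℝ, K1ker s M σ ξ η θ lam ≤
      (2:ℝ) ^ (s/4) * ((|η| / |ξ|) * (jap ((θ ^ 2 + σ * η ^ 2) / ξ) ^ 3)⁻¹) := by
    intro η
    unfold K1ker
    split_ifs with h
    · rw [mul_one]; exact core_le s M σ ξ η θ hs hσ hξ hM
    · rw [mul_zero]
      have := jap_pos ((θ ^ 2 + σ * η ^ 2) / ξ)
      have h1 : (0:ℝ) ≤ (2:ℝ) ^ (s/4) := Real.rpow_nonneg (by norm_num) _
      have h2 : (0:ℝ) ≤ (jap ((θ ^ 2 + σ * η ^ 2) / ξ) ^ 3)⁻¹ := by positivity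
      positivity
  calc ∫⁻ η : ℝ, ENNReal.ofReal (K1ker s M σ ξ η θ lam)
      ≤ ∫⁻ η : ℝ, ENNReal.ofReal ((2:ℝ) ^ (s/4)) *
          ENNReal.ofReal ((|η| / |ξ|) * (jap ((θ ^ 2 + σ * η ^ 2) / ξ) ^ 3)⁻¹) := by
        apply lintegral_mono
        intro η
        dsimp only
        rw [← ENNReal.ofReal_mul (Real.rpow_nonneg (by norm_num) _)]
        exact ENNReal.ofReal_le_ofReal (hpt η)
    _ = ENNReal.ofReal ((2:ℝ) ^ (s/4)) *
        ∫⁻ η : ℝ, ENNReal.ofReal ((|η| / |ξ|) * (jap ((θ ^ 2 + σ * η ^ 2) / ξ) ^ 3)⁻¹) :=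
        lintegral_const_mul' _ _ ENNReal.ofReal_ne_top
    _ ≤ ENNReal.ofReal ((2:ℝ) ^ (s/4)) * ENNReal.ofReal (8 * 4) := by
        apply mul_le_mul_right
        exact layer (by fun_prop) (fun x => by positivity) (by norm_num)
          (fun t ht => by
            have h := estI σ ξ θ hσ hξ t ht
            calc ∫⁻ x in {x | |(θ ^ 2 + σ * x ^ 2) / ξ| ≤ t}, ENNReal.ofReal (|x| / |ξ|)
                ≤ ENNReal.ofReal (4 * t) := h)
    _ = ENNReal.ofReal ((2:ℝ) ^ (s/4) * 32) := by
        rw [← ENNReal.ofReal_mul (Real.rpow_nonneg (by norm_num) _)]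
        norm_num

lemma lam_slice (s M σ ξ η θ : ℝ) :
    ∫⁻ lam : ℝ, ENNReal.ofReal (K1ker s M σ ξ η θ lam) =
      ENNReal.ofReal ((jap (ξ ^ 2 + η ^ 2) ^ (s/2) / jap (ξ ^ 2 + θ ^ 2) ^ (s/2)) * (|η| / |ξ|) *
        jap ((θ ^ 2 + σ * η ^ 2) / ξ) ^ (-M)) * ENNReal.ofReal 2 := by
  set c : ℝ := ξ ^ 5 - θ ^ 2 / ξ with hc
  set P : ℝ := (jap (ξ ^ 2 + η ^ 2) ^ (s/2) / jap (ξ ^ 2 + θ ^ 2) ^ (s/2)) * (|η| / |ξ|) *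
    jap ((θ ^ 2 + σ * η ^ 2) / ξ) ^ (-M) with hP
  have hcond : ∀ lam : ℝ, (|lam - ξ ^ 5 + θ ^ 2 / ξ| ≤ 1) ↔ lam ∈ Set.Icc (c - 1) (c + 1) := by
    intro lam
    rw [Set.mem_Icc, abs_le, hc]
    constructor <;> rintro ⟨h1, h2⟩ <;> constructor <;> linarith
  have heq : (fun lam : ℝ => ENNReal.ofReal (K1ker s M σ ξ η θ lam)) =
      fun lam => Set.indicator (Set.Icc (c - 1) (c + 1)) (fun _ => ENNReal.ofReal P) lam := by
    funext lam
    by_cases h : |lam - ξ ^ 5 + θ ^ 2 / ξ| ≤ 1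
    · rw [Set.indicator_of_mem ((hcond lam).1 h)]
      unfold K1ker
      rw [if_pos h, mul_one, hP]
    · rw [Set.indicator_of_notMem (fun hm => h ((hcond lam).2 hm))]
      unfold K1ker
      rw [if_neg h, mul_zero, ENNReal.ofReal_zero]
  rw [heq, lintegral_indicator measurableSet_Icc, setLIntegral_const, Real.volume_Icc]
  congr 1
  congr 1
  ring

lemma col_bound (s M σ ξ : ℝ) (hs : 0 ≤ s) (hσ : σ = 1 ∨ σ = -1) (hξ : ξ ≠ 0)
    (hM : s / 2 + 3 ≤ M) (η : ℝ) :
    ∫⁻ θ : ℝ, ∫⁻ lam : ℝ, ENNReal.ofReal (K1ker s M σ ξ η θ lam) ≤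
      ENNReal.ofReal ((2:ℝ) ^ (s/4) * 64) := by
  calc ∫⁻ θ : ℝ, ∫⁻ lam : ℝ, ENNReal.ofReal (K1ker s M σ ξ η θ lam)
      = ∫⁻ θ : ℝ, ENNReal.ofReal ((jap (ξ ^ 2 + η ^ 2) ^ (s/2) / jap (ξ ^ 2 + θ ^ 2) ^ (s/2)) *
          (|η| / |ξ|) * jap ((θ ^ 2 + σ * η ^ 2) / ξ) ^ (-M)) * ENNReal.ofReal 2 := by
        apply lintegral_congr
        intro θ
        exact lam_slice s M σ ξ η θ
    _ ≤ ∫⁻ θ : ℝ, ENNReal.ofReal ((2:ℝ) ^ (s/4)) *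
          ENNReal.ofReal ((|η| / |ξ|) * (jap ((θ ^ 2 + σ * η ^ 2) / ξ) ^ 3)⁻¹) *
          ENNReal.ofReal 2 := by
        apply lintegral_mono
        intro θ
        apply mul_le_mul_left
        rw [← ENNReal.ofReal_mul (Real.rpow_nonneg (by norm_num) _)]
        exact ENNReal.ofReal_le_ofReal (core_le s M σ ξ η θ hs hσ hξ hM)
    _ = ENNReal.ofReal ((2:ℝ) ^ (s/4)) *
          (∫⁻ θ : ℝ, ENNReal.ofReal ((|η| / |ξ|) * (jap ((θ ^ 2 + σ * η ^ 2) / ξ) ^ 3)⁻¹)) *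
          ENNReal.ofReal 2 := by
        rw [lintegral_mul_const' _ _ ENNReal.ofReal_ne_top,
          lintegral_const_mul' _ _ ENNReal.ofReal_ne_top]
    _ ≤ ENNReal.ofReal ((2:ℝ) ^ (s/4)) * ENNReal.ofReal (8 * 4) * ENNReal.ofReal 2 := by
        apply mul_le_mul_left
        apply mul_le_mul_right
        exact layer (v := fun θ : ℝ => (θ ^ 2 + σ * η ^ 2) / ξ)
          (w := fun _ : ℝ => |η| / |ξ|) (by fun_prop) (fun x => by positivity) (by norm_num)
          (fun t ht => estII σ ξ η hσ hξ t ht)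
    _ = ENNReal.ofReal ((2:ℝ) ^ (s/4) * 64) := by
        rw [← ENNReal.ofReal_mul (Real.rpow_nonneg (by norm_num) _),
          ← ENNReal.ofReal_mul (by positivity)]
        congr 1
        ring


/-- For `s ≥ 0`, a sign `σ = ±1`, and `M` large enough depending on `s`, the kernel `K¹_ξ`
satisfies the Schur bounds `∫ K¹_ξ dη ≤ C` and `∫∫ K¹_ξ dθ dλ ≤ C` uniformly in `ξ ≠ 0`;
consequently the associated integral operator is bounded on `L²` uniformly in `ξ`. -/
theorem stmt11 (s σ : ℝ) (hs : 0 ≤ s) (hσ : σ = 1 ∨ σ = -1) :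
    ∃ M₀ : ℝ, ∀ M : ℝ, M₀ ≤ M → ∃ C > (0:ℝ), ∀ ξ : ℝ, ξ ≠ 0 →
      (∀ θ lam : ℝ,
        ∫⁻ η : ℝ, ENNReal.ofReal (K1ker s M σ ξ η θ lam) ≤ ENNReal.ofReal C) ∧
      (∀ η : ℝ,
        ∫⁻ θ : ℝ, ∫⁻ lam : ℝ, ENNReal.ofReal (K1ker s M σ ξ η θ lam) ≤
          ENNReal.ofReal C) ∧
      (∀ f : ℝ × ℝ → ℝ, MemLp f 2 volume →
        eLpNorm (fun η : ℝ => ∫ p : ℝ × ℝ, K1ker s M σ ξ η p.1 p.2 * f p) 2 volume ≤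
          ENNReal.ofReal C * eLpNorm f 2 volume) := by
  refine ⟨s / 2 + 3, fun M hM => ⟨(2:ℝ) ^ (s/4) * 64, by positivity, fun ξ hξ => ?_⟩⟩
  have hrow := row_bound s M σ ξ hs hσ hξ hM
  have hcol := col_bound s M σ ξ hs hσ hξ hM
  have hrow' : ∀ θ lam : ℝ, ∫⁻ η : ℝ, ENNReal.ofReal (K1ker s M σ ξ η θ lam) ≤
      ENNReal.ofReal ((2:ℝ) ^ (s/4) * 64) := by
    intro θ lam
    refine (hrow θ lam).trans (ENNReal.ofReal_le_ofReal ?_)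
    have : (0:ℝ) ≤ (2:ℝ) ^ (s/4) := Real.rpow_nonneg (by norm_num) _
    nlinarith
  refine ⟨fun θ lam => hrow' θ lam, fun η => hcol η, ?_⟩
  intro f hf
  set k : ℝ → ℝ × ℝ → ℝ := fun η p => K1ker s M σ ξ η p.1 p.2 with hk
  have hkm : Measurable (Function.uncurry k) := K1ker_measurable s M σ ξ
  have hk0 : ∀ x y, 0 ≤ k x y := fun x y => K1ker_nonneg s M σ ξ x y.1 y.2
  have hprod : ∀ η : ℝ, ∫⁻ p : ℝ × ℝ, ENNReal.ofReal (k η p) ≤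
      ENNReal.ofReal ((2:ℝ) ^ (s/4) * 64) := by
    intro η
    have hmeas : AEMeasurable (fun p : ℝ × ℝ => ENNReal.ofReal (k η p))
        (volume : Measure (ℝ × ℝ)) :=
      (ENNReal.measurable_ofReal.comp hkm.of_uncurry_left).aemeasurable
    rw [show (volume : Measure (ℝ × ℝ)) = (volume : Measure ℝ).prod volume from
      Measure.volume_eq_prod ℝ ℝ]
    rw [lintegral_prod _ (by
      rw [← Measure.volume_eq_prod]
      exact hmeas)]
    exact hcol η
  have := schur (volume : Measure ℝ) (volume : Measure (ℝ × ℝ)) k hkm hk0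
    (ENNReal.ofReal ((2:ℝ) ^ (s/4) * 64)) ENNReal.ofReal_ne_top
    hprod (fun p => hrow' p.1 p.2) f hf
  exact this
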